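/- For the binary AIFV tree T1 with Kraft-type equality (4/3)·∑_{x∈N0} 2^{-l(x)} + ∑_{x∈N1} 2^{-l(x)} = 1, the average code length satisfies L1 = ∑_x P(x)·l(x) ≥ H_2(X) + P(N0)·(2 − log_2 3), where P(N0) = ∑_{x∈N0} P(x). -/
import Mathlib


open Finset in
/-- Kraft-type lower bound for the binary AIFV tree T1. -/
theorem stmt_9 {X : Type*} [Fintype X] [DecidableEq X]
    (N0 N1 : Finset X) (hdisj : Disjoint N0 N1) (hcover : N0 ∪ N1 = Finset.univ)
    (P : X → ℝ) (hP : ∀ x, 0 ≤ P x) (hPsum : ∑ x, P x = 1)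
    (l : X → ℕ)
    (hKraft : (4/3) * ∑ x ∈ N0, ((2 : ℝ) ^ (l x))⁻¹
        + ∑ x ∈ N1, ((2 : ℝ) ^ (l x))⁻¹ = 1) :
    ∑ x, P x * (l x : ℝ) ≥
      (-∑ x, P x * Real.logb 2 (P x)) + (∑ x ∈ N0, P x) * (2 - Real.logb 2 3) := by
  classical
  set Q : X → ℝ := fun x => if x ∈ N0 then (4/3) * ((2:ℝ) ^ (l x))⁻¹ else ((2:ℝ) ^ (l x))⁻¹
    with hQdef
  have hQpos : ∀ x, 0 < Q x := by
    intro x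
    have h2 : (0:ℝ) < ((2:ℝ) ^ (l x))⁻¹ := by positivity
    by_cases hx : x ∈ N0 <;> simp only [hQdef, hx, if_true, if_false] <;> positivity

  have hQsum : ∑ x, Q x = 1 := by
    rw [← hcover, Finset.sum_union hdisj]
    have h0 : ∑ x ∈ N0, Q x = (4/3) * ∑ x ∈ N0, ((2:ℝ) ^ (l x))⁻¹ := by
      rw [Finset.mul_sum]
      exact Finset.sum_congr rfl fun x hx => by simp [hQdef, hx]
    have h1 : ∑ x ∈ N1, Q x = ∑ x ∈ N1, ((2:ℝ) ^ (l x))⁻¹ := by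
      refine Finset.sum_congr rfl fun x hx => ?_
      have : x ∉ N0 := fun h => (Finset.disjoint_left.mp hdisj h) hx
      simp [hQdef, this]
    rw [h0, h1, hKraft]
  -- Gibbs inequality
  have gibbs : ∑ x, P x * Real.log (Q x) ≤ ∑ x, P x * Real.log (P x) := by
    have key : ∀ x, P x * Real.log (Q x) - P x * Real.log (P x) ≤ Q x - P x := by
      intro x
      rcases eq_or_lt_of_le (hP x) with h0 | h0
      · simp [← h0]; exact le_of_lt (hQpos x)
      · have hq := hQpos x
        have hlog : Real.log (Q x / P x) ≤ Q x / P x - 1 :=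
          Real.log_le_sub_one_of_pos (by positivity)
        have := mul_le_mul_of_nonneg_left hlog (hP x)
        rw [Real.log_div (ne_of_gt hq) (ne_of_gt h0), mul_sub, mul_sub,
          mul_div_cancel₀ _ (ne_of_gt h0), mul_one] at this
        linarith
    have : ∑ x, (P x * Real.log (Q x) - P x * Real.log (P x)) ≤ ∑ x, (Q x - P x) :=
      Finset.sum_le_sum fun x _ => key x
    rw [Finset.sum_sub_distrib, Finset.sum_sub_distrib, hQsum, hPsum] at this
    linarith
  -- compute ∑ P log Q
  have hlogQ : ∑ x, P x * Real.log (Q x)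
      = (∑ x ∈ N0, P x) * (Real.log 4 - Real.log 3)
        - Real.log 2 * ∑ x, P x * (l x : ℝ) := by
    have hterm : ∀ x, P x * Real.log (Q x)
        = (if x ∈ N0 then P x * (Real.log 4 - Real.log 3) else 0)
          - Real.log 2 * (P x * (l x : ℝ)) := by
      intro x
      have hpow : Real.log (((2:ℝ) ^ (l x))⁻¹) = -(l x * Real.log 2) := by
        rw [Real.log_inv, Real.log_pow]
      by_cases hx : x ∈ N0
      · have : Real.log ((4/3) * ((2:ℝ) ^ (l x))⁻¹)
            = (Real.log 4 - Real.log 3) + -(l x * Real.log 2) := by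
          rw [Real.log_mul (by norm_num) (by positivity), Real.log_div (by norm_num) (by norm_num), hpow]
        simp only [hQdef, hx, if_true, this]
        ring
      · simp only [hQdef, hx, if_false, hpow]
        ring
    rw [Finset.sum_congr rfl fun x _ => hterm x, Finset.sum_sub_distrib,
      Finset.sum_ite_mem, Finset.univ_inter, ← Finset.sum_mul, ← Finset.mul_sum]
  have hlog2 : (0:ℝ) < Real.log 2 := Real.log_pos (by norm_num)
  have hlogb : ∀ y : ℝ, Real.logb 2 y = Real.log y / Real.log 2 := fun y => rfl
  have hsumlogb : ∑ x, P x * Real.logb 2 (P x) = (∑ x, P x * Real.log (P x)) / Real.log 2 := by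
    rw [Finset.sum_div]
    exact Finset.sum_congr rfl fun x _ => by rw [hlogb]; ring
  have h4 : Real.log 4 = 2 * Real.log 2 := by
    rw [show (4:ℝ) = 2^2 by norm_num, Real.log_pow]; push_cast; ring
  have key : (∑ x ∈ N0, P x) * (2 * Real.log 2 - Real.log 3)
      - Real.log 2 * ∑ x, P x * (l x : ℝ) ≤ ∑ x, P x * Real.log (P x) := by
    have := gibbs; rw [hlogQ, h4] at this; linarith
  rw [ge_iff_le, hsumlogb, Real.logb, ← sub_nonneg]
  have expand : (∑ x, P x * (l x : ℝ))
      - (-((∑ x, P x * Real.log (P x)) / Real.log 2)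
        + (∑ x ∈ N0, P x) * (2 - Real.log 3 / Real.log 2))
      = ((∑ x, P x * Real.log (P x))
          - ((∑ x ∈ N0, P x) * (2 * Real.log 2 - Real.log 3)
            - Real.log 2 * ∑ x, P x * (l x : ℝ))) / Real.log 2 := by
    field_simp
    ring
  rw [expand]
  exact div_nonneg (by linarith) hlog2.le
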